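/- Let β be flat with S(β) degenerate as above, and let γ(X,Y) = (α(X,Y), α(X,JY)) satisfy the compatibility ⟨⟨β(X,Y),γ(Z,T)⟩⟩ = ⟨⟨β(X,T),γ(Z,Y)⟩⟩ for all X,Y,Z,T. If s = dim π₁(S(β)) ≤ n−1, then for the light-like vector v with S(β) ∩ S(β)^⊥ = span{v} ⊕ span{v}, one has ⟨α(X,Y),v⟩ = 0 for all X,Y ∈ V^{2n}. -/

import Mathlib

open Module Polynomial

namespace Stmt12

variable {V E : Type*} [AddCommGroup V] [Module ℝ V]
  [AddCommGroup E] [Module ℝ E] [FiniteDimensional ℝ E]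

noncomputable def Uspan (A : V →ₗ[ℝ] V →ₗ[ℝ] E) (y : V) : Submodule ℝ E :=
  Submodule.span ℝ (Set.range fun z => A z y)

lemma moore_mem (A : V →ₗ[ℝ] V →ₗ[ℝ] E) (Q : E →ₗ[ℝ] E →ₗ[ℝ] ℝ)
    (hQ0 : ∀ ξ ∈ Submodule.span ℝ {ξ : E | ∃ x y, ξ = A x y}, Q ξ ξ = 0 → ξ = 0)
    (Y₀ : V) (hmax : ∀ y, finrank ℝ (Uspan A y) ≤ finrank ℝ (Uspan A Y₀))
    (u : V) (hu : A u Y₀ = 0) : A u u ∈ Uspan A Y₀ := by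
  classical
  obtain ⟨b, hbsub, hbspan, hbind⟩ := exists_linearIndependent ℝ (Set.range fun z => A z Y₀)
  have hbfin : b.Finite := hbind.setFinite
  haveI : Fintype b := hbfin.fintype
  have hzc : ∀ j : b, ∃ z : V, A z Y₀ = (j : E) := fun j => by
    rcases hbsub j.2 with ⟨z, hz⟩; exact ⟨z, hz⟩
  choose zc hzc' using hzc
  set aa : b → E := fun j => A (zc j) Y₀ with haa
  have haaeq : aa = fun j : b => (j : E) := funext fun j => hzc' j
  have haind : LinearIndependent ℝ aa := by rw [haaeq]; exact hbind
  set bb : b → E := fun j => A (zc j) u with hbb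
  set η : E := A u u with hη
  have hUY0 : Uspan A Y₀ = Submodule.span ℝ b := by rw [Uspan, ← hbspan]
  have hcard : finrank ℝ (Uspan A Y₀) = Fintype.card b := by
    rw [hUY0, finrank_span_set_eq_card hbind, Set.toFinset_card]
  -- values of A are in the distinguished span
  have hval : ∀ x y : V, A x y ∈ Submodule.span ℝ {ξ : E | ∃ x y, ξ = A x y} :=
    fun x y => Submodule.subset_span ⟨x, y, rfl⟩
  -- the perturbed family
  set va : ℝ → b → E := fun s j => aa j + s • bb j with hva
  have hvaA : ∀ s j, va s j = A (zc j) (Y₀ + s • u) := by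
    intro s j; simp [hva, haa, hbb, map_add, map_smul]
  -- Gram matrices
  set Gs : ℝ → Matrix b b ℝ := fun s i j => Q (va s i) (va s j) with hGs
  -- polynomial versions
  set Gh : Matrix b b ℝ[X] := fun i j =>
    C (Q (aa i) (aa j)) + C (Q (aa i) (bb j) + Q (bb i) (aa j)) * X
      + C (Q (bb i) (bb j)) * X ^ 2 with hGh
  set Bh : b → ℝ[X] := fun i => C (Q (aa i) η) + C (Q (bb i) η) * X with hBh
  set ch : b → ℝ[X] := Gh.cramer Bh with hch
  have hGev : ∀ s : ℝ, Gh.map (eval s) = Gs s := by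
    intro s; ext i j
    show eval s (Gh i j) = _
    simp only [hGh, hGs, Matrix.map_apply, eval_add, eval_mul, eval_C, eval_X, eval_pow, hva,
      map_add, map_smul, LinearMap.add_apply, LinearMap.smul_apply, smul_eq_mul]
    ring
  have hBev : ∀ s : ℝ, (eval s) ∘ Bh = (fun i => Q (va s i) η) := by
    intro s; funext i
    simp only [hBh, Function.comp_apply, eval_add, eval_mul, eval_C, eval_X, hva,
      map_add, map_smul, LinearMap.add_apply, LinearMap.smul_apply, smul_eq_mul]
    ring
  have hdev : ∀ s : ℝ, eval s Gh.det = (Gs s).det := by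
    intro s
    have := RingHom.map_det (evalRingHom s) Gh
    simpa [RingHom.mapMatrix_apply, hGev s] using this
  have hcev : ∀ (s : ℝ) (j : b), eval s (ch j) = (Gs s).cramer (fun i => Q (va s i) η) j := by
    intro s j
    rw [hch, Matrix.cramer_apply, Matrix.cramer_apply]
    have := RingHom.map_det (evalRingHom s) (Matrix.updateCol Gh j Bh)
    simpa [RingHom.mapMatrix_apply, Matrix.map_updateCol, hGev s, hBev s] using this
  -- determinant at 0 is nonzero
  have hva0 : va 0 = aa := by funext j; simp [hva]
  have hd0 : (Gs 0).det ≠ 0 := by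
    intro h0
    obtain ⟨cvec, hcz, hmv⟩ := Matrix.exists_mulVec_eq_zero_iff.mpr h0
    set ξ : E := ∑ j : b, cvec j • aa j with hξ
    have hQrow : ∀ i : b, Q (aa i) ξ = 0 := by
      intro i
      have : (Gs 0).mulVec cvec i = 0 := by rw [hmv]; rfl
      rw [← this]
      simp [hξ, Matrix.mulVec, dotProduct, hGs, hva0, map_sum, map_smul, smul_eq_mul,
        mul_comm]
    have hQξ : Q ξ ξ = 0 := by
      have h1 : Q ξ = ∑ i : b, cvec i • Q (aa i) := by
        rw [hξ, map_sum]; simp only [map_smul]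
      have h2 : Q ξ ξ = ∑ i : b, cvec i * Q (aa i) ξ := by
        rw [h1]; simp [LinearMap.sum_apply, LinearMap.smul_apply, smul_eq_mul]
      rw [h2]
      simp [hQrow]
    have hmem : ξ ∈ Submodule.span ℝ {ξ : E | ∃ x y, ξ = A x y} := by
      refine Submodule.sum_mem _ fun j _ => Submodule.smul_mem _ _ (hval (zc j) Y₀)
    have hξ0 : ξ = 0 := hQ0 ξ hmem hQξ
    have := Fintype.linearIndependent_iff.mp haind cvec (by rw [← hξ]; exact hξ0)
    exact hcz (funext this)
  have hdh0 : Gh.det ≠ 0 := by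
    intro h
    have := hdev 0
    rw [h] at this
    simp at this
    exact hd0 this.symm
  -- the good set is infinite
  have hbad : ({s : ℝ | eval s Gh.det = 0} ∪ {0}).Finite := by
    refine Set.Finite.union ?_ (Set.finite_singleton 0)
    exact Polynomial.finite_setOf_isRoot hdh0
  have hgood : ({s : ℝ | eval s Gh.det = 0} ∪ {0})ᶜ.Infinite := hbad.infinite_compl
  -- main pointwise identity on good points
  have hmain : ∀ s : ℝ, s ∉ ({s : ℝ | eval s Gh.det = 0} ∪ {0}) →
      ((Gs s).det • η = ∑ j : b, eval s (ch j) • va s j) := by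
    intro s hsgood
    have hs0 : s ≠ 0 := fun h => hsgood (Or.inr h)
    have hds : (Gs s).det ≠ 0 := fun h => hsgood (Or.inl (by rw [Set.mem_setOf_eq, hdev]; exact h))
    -- mulVec injectivity
    have hinj : ∀ g : b → ℝ, (Gs s).mulVec g = 0 → g = 0 := by
      intro g hg
      have h1 : ((Gs s).adjugate * Gs s).mulVec g = 0 := by
        rw [← Matrix.mulVec_mulVec, hg, Matrix.mulVec_zero]
      rw [Matrix.adjugate_mul, Matrix.smul_mulVec, Matrix.one_mulVec] at h1
      have := smul_eq_zero.mp h1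
      tauto
    -- independence of the perturbed family
    have hvind : LinearIndependent ℝ (va s) := by
      rw [Fintype.linearIndependent_iff]
      intro g hg i
      have hmv : (Gs s).mulVec g = 0 := by
        funext i
        simp only [Pi.zero_apply]
        have : Q (va s i) (∑ j : b, g j • va s j) = 0 := by rw [hg]; simp
        rw [← this]
        simp [Matrix.mulVec, dotProduct, hGs, map_sum, map_smul, smul_eq_mul, mul_comm]
      exact congrFun (hinj g hmv) i
    -- span equality
    have hle : Submodule.span ℝ (Set.range (va s)) ≤ Uspan A (Y₀ + s • u) := by
      rw [Submodule.span_le]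
      rintro _ ⟨j, rfl⟩
      rw [hvaA s j]
      exact Submodule.subset_span (Set.mem_range_self _)
    have hfr : finrank ℝ (Uspan A (Y₀ + s • u)) ≤
        finrank ℝ (Submodule.span ℝ (Set.range (va s))) := by
      rw [finrank_span_eq_card hvind]
      rw [← hcard]
      exact hmax _
    have hspeq : Submodule.span ℝ (Set.range (va s)) = Uspan A (Y₀ + s • u) :=
      Submodule.eq_of_le_of_finrank_le hle hfr
    -- η in the span
    have hηmem : η ∈ Submodule.span ℝ (Set.range (va s)) := by
      rw [hspeq]
      have h1 : A u (Y₀ + s • u) = s • η := by simp [map_add, map_smul, hu, hη]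
      have h2 : A u (Y₀ + s • u) ∈ Uspan A (Y₀ + s • u) :=
        Submodule.subset_span (Set.mem_range_self _)
      have h3 : s • η ∈ Uspan A (Y₀ + s • u) := h1 ▸ h2
      have := Submodule.smul_mem _ s⁻¹ h3
      rwa [smul_smul, inv_mul_cancel₀ hs0, one_smul] at this
    obtain ⟨cf, hcf⟩ := (Submodule.mem_span_range_iff_exists_fun ℝ).mp hηmem
    -- the Gram linear system
    have hsys : (Gs s).mulVec cf = (fun i => Q (va s i) η) := by
      funext i
      rw [← hcf]
      simp [Matrix.mulVec, dotProduct, hGs, map_sum, map_smul, smul_eq_mul, mul_comm]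
    -- cramer solves it
    have hcram : (Gs s).cramer (fun i => Q (va s i) η) = (Gs s).det • cf := by
      have hz : (Gs s).mulVec ((Gs s).cramer (fun i => Q (va s i) η) - (Gs s).det • cf) = 0 := by
        have e1 : (Gs s).mulVec ((Gs s).cramer (fun i => Q (va s i) η)) =
            (Gs s).det • (fun i => Q (va s i) η) := Matrix.mulVec_cramer _ _
        have e2 : (Gs s).mulVec ((Gs s).det • cf) = (Gs s).det • ((Gs s).mulVec cf) := by
          rw [Matrix.mulVec_smul]
        rw [Matrix.mulVec_sub, e1, e2, hsys, sub_self]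
      have := hinj _ hz
      exact sub_eq_zero.mp this
    calc (Gs s).det • η = (Gs s).det • ∑ j : b, cf j • va s j := by rw [hcf]
      _ = ∑ j : b, ((Gs s).det * cf j) • va s j := by
          rw [Finset.smul_sum]; simp [smul_smul]
      _ = ∑ j : b, eval s (ch j) • va s j := by
          refine Finset.sum_congr rfl fun j _ => ?_
          rw [hcev s j, hcram]
          simp [smul_eq_mul]
  -- conclude via dual functionals and the polynomial identity
  have hfinal : ∀ ℓ : Module.Dual ℝ E,
      ℓ ((Gs 0).det • η - ∑ j : b, eval 0 (ch j) • aa j) = 0 := by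
    intro ℓ
    set P : ℝ[X] := Gh.det * C (ℓ η) - ∑ j : b, ch j * (C (ℓ (aa j)) + C (ℓ (bb j)) * X) with hP
    have hPs : ∀ s ∈ ({s : ℝ | eval s Gh.det = 0} ∪ {0})ᶜ, eval s P = 0 := by
      intro s hs
      have hm := hmain s hs
      have h2 : eval s P = ℓ ((Gs s).det • η - ∑ j : b, eval s (ch j) • va s j) := by
        simp only [hP, eval_sub, eval_mul, eval_add, eval_C, eval_X, eval_finset_sum, hdev,
          map_sub, map_smul, map_sum, smul_eq_mul, hva, map_add]
        congr 1
        refine Finset.sum_congr rfl fun j _ => ?_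
        ring
      rw [h2, hm, sub_self, map_zero]
    have hProots : P = 0 := by
      apply Polynomial.eq_zero_of_infinite_isRoot
      exact hgood.mono fun s hs => hPs s hs
    have h0 := congrArg (eval 0) hProots
    simp only [hP, eval_sub, eval_mul, eval_add, eval_C, eval_X, eval_finset_sum, eval_zero,
      hdev, mul_zero, add_zero] at h0
    simp only [map_sub, map_smul, map_sum, smul_eq_mul]
    rw [sub_eq_zero]
    rw [sub_eq_zero] at h0
    exact h0
  have hvec : (Gs 0).det • η = ∑ j : b, eval 0 (ch j) • aa j := by
    have h := (Module.forall_dual_apply_eq_zero_iff ℝ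
      ((Gs 0).det • η - ∑ j : b, eval 0 (ch j) • aa j)).mp hfinal
    exact sub_eq_zero.mp h
  have hmem : (Gs 0).det • η ∈ Uspan A Y₀ := by
    rw [hvec, hUY0]
    refine Submodule.sum_mem _ fun j _ => Submodule.smul_mem _ _ ?_
    have : aa j = (j : E) := hzc' j
    rw [this]
    exact Submodule.subset_span j.2
  have hfin2 := Submodule.smul_mem (Uspan A Y₀) ((Gs 0).det)⁻¹ hmem
  rwa [smul_smul, inv_mul_cancel₀ hd0, one_smul] at hfin2


lemma moore (A : V →ₗ[ℝ] V →ₗ[ℝ] E) (p Q : E →ₗ[ℝ] E →ₗ[ℝ] ℝ)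
    (h1 : ∀ x t z y : V, p (A x t) (A z y) = p (A x y) (A z t))
    (hQ0 : ∀ ξ ∈ Submodule.span ℝ {ξ : E | ∃ x y, ξ = A x y}, Q ξ ξ = 0 → ξ = 0)
    (h3 : ∀ u t : V, p (A t u) (A u t) = Q (A u t) (A u t)) :
    ∃ Y₀ : V, ∀ u : V, A u Y₀ = 0 → ∀ t : V, A u t = 0 := by
  classical
  have hbdd : BddAbove (Set.range fun y : V => finrank ℝ (Uspan A y)) := by
    refine ⟨finrank ℝ E, ?_⟩
    rintro k ⟨y, rfl⟩; exact Submodule.finrank_le _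
  have hne : (Set.range fun y : V => finrank ℝ (Uspan A y)).Nonempty := ⟨_, ⟨0, rfl⟩⟩
  obtain ⟨Y₀, hY₀⟩ := Nat.sSup_mem hne hbdd
  have hmax : ∀ y, finrank ℝ (Uspan A y) ≤ finrank ℝ (Uspan A Y₀) := by
    intro y
    have h2 : finrank ℝ (Uspan A Y₀) = sSup (Set.range fun y : V => finrank ℝ (Uspan A y)) := hY₀
    rw [h2]; exact le_csSup hbdd ⟨y, rfl⟩
  refine ⟨Y₀, fun u hu t => ?_⟩
  have horth : Uspan A Y₀ ≤ LinearMap.ker (p (A u u)) := by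
    rw [Uspan, Submodule.span_le]
    rintro _ ⟨z, rfl⟩
    rw [SetLike.mem_coe, LinearMap.mem_ker, h1 u u z Y₀, hu]
    simp
  have hmem : A u u ∈ Uspan A Y₀ := moore_mem A Q hQ0 Y₀ hmax u hu
  have hp : p (A u u) (A u u) = 0 := horth hmem
  have hQη : Q (A u u) (A u u) = 0 := by rw [← h3 u u]; exact hp
  have hη0 : A u u = 0 := hQ0 _ (Submodule.subset_span ⟨u, u, rfl⟩) hQη
  have hQt : Q (A u t) (A u t) = 0 := by
    rw [← h3 u t, h1 t u u t, hη0]; simp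
  exact hQ0 _ (Submodule.subset_span ⟨u, t, rfl⟩) hQt

end Stmt12

set_option maxHeartbeats 2000000

theorem stmt_12 (n : ℕ) (V L : Type*) [AddCommGroup V] [Module ℝ V] [FiniteDimensional ℝ V]
    [AddCommGroup L] [Module ℝ L] [FiniteDimensional ℝ L]
    (hdV : Module.finrank ℝ V = 2 * n)
    (BV : LinearMap.BilinForm ℝ V) (hVsymm : BV.IsSymm)
    (hVpos : ∀ X : V, X ≠ 0 → 0 < BV X X)
    (J : V →ₗ[ℝ] V) (hJ : J ∘ₗ J = -LinearMap.id)
    (hJiso : ∀ X Y : V, BV (J X) (J Y) = BV X Y)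
    (BL : LinearMap.BilinForm ℝ L) (hLsymm : BL.IsSymm)
    (w : L) (hw : BL w w = -1)
    (hLor : ∀ x : L, BL x w = 0 → x ≠ 0 → 0 < BL x x)
    (α : V →ₗ[ℝ] V →ₗ[ℝ] L) (hαsymm : ∀ X Y : V, α X Y = α Y X)
    (hαw : ∀ X Y : V, BL (α X Y) w = -(BV X Y))
    (β : V →ₗ[ℝ] V →ₗ[ℝ] L × L)
    (hβ : ∀ X Y : V, β X Y = (α X Y + α (J X) (J Y), α X (J Y) - α (J X) Y))
    (Bw : LinearMap.BilinForm ℝ (L × L))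
    (hBw : ∀ a b : L × L, Bw a b = BL a.1 b.1 - BL a.2 b.2)
    (hflat : ∀ X Y Z T : V, Bw (β X Y) (β Z T) = Bw (β X T) (β Z Y))
    (γ : V → V → L × L) (hγ : ∀ X Y : V, γ X Y = (α X Y, α X (J Y)))
    (hcompat : ∀ X Y Z T : V, Bw (β X Y) (γ Z T) = Bw (β X T) (γ Z Y))
    (Sβ : Submodule ℝ (L × L))
    (hSβ : Sβ = Submodule.span ℝ {z : L × L | ∃ X Y : V, z = β X Y})
    (hdeg : Sβ ⊓ Bw.orthogonal Sβ ≠ ⊥)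
    (s : ℕ) (hs : s = Module.finrank ℝ (Submodule.map (LinearMap.fst ℝ L L) Sβ))
    (hsn : s ≤ n - 1)
    (v : L) (hv0 : v ≠ 0) (hvlight : BL v v = 0)
    (hvrad : Sβ ⊓ Bw.orthogonal Sβ =
      (Submodule.span ℝ {v}).prod (Submodule.span ℝ {v})) :
    ∀ X Y : V, BL (α X Y) v = 0 := by
  classical
  have hBLs : ∀ x y : L, BL x y = BL y x := fun x y => by
    have := hLsymm.eq x y; simpa using this
  have hBVs : ∀ x y : V, BV x y = BV y x := fun x y => by
    have := hVsymm.eq x y; simpa using this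
  have hJJ : ∀ x : V, J (J x) = -x := fun x => by
    have := LinearMap.ext_iff.mp hJ x
    simpa using this
  -- the key scalar
  set cv : ℝ := BL v w with hcv
  have hc0 : cv ≠ 0 := by
    intro h
    have := hLor v (by rw [← hcv]; exact h) hv0
    rw [hvlight] at this; exact lt_irrefl 0 this
  -- radical membership
  have hv0mem : ((v, 0) : L × L) ∈ Sβ ⊓ Bw.orthogonal Sβ := by
    rw [hvrad]
    exact Submodule.mem_prod.mpr ⟨Submodule.mem_span_singleton_self v, Submodule.zero_mem _⟩
  have h0vmem : ((0, v) : L × L) ∈ Sβ ⊓ Bw.orthogonal Sβ := by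
    rw [hvrad]
    exact Submodule.mem_prod.mpr ⟨Submodule.zero_mem _, Submodule.mem_span_singleton_self v⟩
  have hβmem : ∀ X Y : V, β X Y ∈ Sβ := fun X Y => by
    rw [hSβ]; exact Submodule.subset_span ⟨X, Y, rfl⟩
  -- orthogonality of v to the two components of β
  have horthv : ∀ Z T : V, BL (α Z T + α (J Z) (J T)) v = 0 := by
    intro Z T
    have h := (Submodule.mem_inf.mp hv0mem).2
    rw [LinearMap.BilinForm.mem_orthogonal_iff] at h
    have h2 := h _ (hβmem Z T)
    rw [hBw, hβ] at h2
    simpa using h2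
  have horthv2 : ∀ Z T : V, BL (α Z (J T) - α (J Z) T) v = 0 := by
    intro Z T
    have h := (Submodule.mem_inf.mp h0vmem).2
    rw [LinearMap.BilinForm.mem_orthogonal_iff] at h
    have h2 := h _ (hβmem Z T)
    rw [hBw, hβ] at h2
    have h4 : BL (α (J Z) T) v - BL (α Z (J T)) v = 0 := by simpa using h2
    have h5 : BL (α Z (J T)) v - BL (α (J Z) T) v = 0 := by linarith
    simpa [map_sub, LinearMap.sub_apply] using h5

  -- the bilinear map τ
  set τ : V →ₗ[ℝ] V →ₗ[ℝ] L :=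
    α + α.compl₁₂ J J + ((2 / cv) • BV).compr₂ (LinearMap.toSpanSingleton ℝ L v) with hτdef
  have hτ : ∀ x y : V, τ x y = α x y + α (J x) (J y) + ((2 / cv) * BV x y) • v := by
    intro x y
    simp only [hτdef, LinearMap.add_apply, LinearMap.compl₁₂_apply, LinearMap.compr₂_apply,
      LinearMap.toSpanSingleton_apply, LinearMap.smul_apply, smul_eq_mul]
  have hτw : ∀ x y : V, BL (τ x y) w = 0 := by
    intro x y
    rw [hτ]
    simp only [map_add, map_smul, LinearMap.add_apply, LinearMap.smul_apply, smul_eq_mul]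
    rw [hαw, hαw, hJiso, ← hcv]
    field_simp
    ring
  have hττ : ∀ x y z t : V, BL (τ x y) (τ z t) =
      BL (α x y + α (J x) (J y)) (α z t + α (J z) (J t)) := by
    intro x y z t
    obtain ⟨φ1, hφ1⟩ : ∃ a, a = α x y + α (J x) (J y) := ⟨_, rfl⟩
    obtain ⟨φ2, hφ2⟩ : ∃ a, a = α z t + α (J z) (J t) := ⟨_, rfl⟩
    have e1 : BL φ1 v = 0 := by rw [hφ1]; exact horthv x y
    have e2 : BL v φ2 = 0 := by rw [hBLs, hφ2]; exact horthv z t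
    rw [hτ x y, hτ z t, ← hφ1, ← hφ2]
    simp only [map_add, map_smul, LinearMap.add_apply, LinearMap.smul_apply, smul_eq_mul]
    rw [e1, e2, hvlight]
    ring
  have hψeq : ∀ x y : V, α x (J y) - α (J x) y = α x (J y) + α (J x) (J (J y)) := by
    intro x y
    rw [hJJ y, map_neg]
    abel
  have hF1 : ∀ x y z t : V,
      BL (τ x y) (τ z t) - BL (τ x (J y)) (τ z (J t)) =
      BL (τ x t) (τ z y) - BL (τ x (J t)) (τ z (J y)) := by
    intro x y z t
    have e : ∀ a b c d : V, BL (τ a b) (τ c d) - BL (τ a (J b)) (τ c (J d)) =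
        Bw (β a b) (β c d) := by
      intro a b c d
      rw [hττ a b c d, hττ a (J b) c (J d), hBw, hβ, hβ]
      rw [← hψeq a b, ← hψeq c d]
    rw [e, e, hflat]
  -- symmetry and J-identities for τ
  have hτsymm : ∀ x y : V, τ x y = τ y x := by
    intro x y
    rw [hτ, hτ, hαsymm x y, hαsymm (J x) (J y), hBVs x y]
  have hτJJ : ∀ x y : V, τ (J x) (J y) = τ x y := by
    intro x y
    have h1 : α (J (J x)) (J (J y)) = α x y := by rw [hJJ x, hJJ y]; simp [map_neg]
    rw [hτ, hτ, hJiso, h1]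
    abel
  have hτJ : ∀ x y : V, τ (J x) y = -τ x (J y) := by
    intro x y
    have h2 := hτJJ x (J y)
    rw [hJJ y, map_neg] at h2
    exact neg_eq_iff_eq_neg.mp h2
  have hτxJx : ∀ x : V, τ x (J x) = 0 := by
    intro x
    have h1 : τ x (J x) = -τ x (J x) := by
      calc τ x (J x) = τ (J x) x := hτsymm x (J x)
        _ = -τ x (J x) := hτJ x x
    have h2 : τ x (J x) + τ x (J x) = 0 := by
      nth_rewrite 1 [h1]; abel
    have h3 : (2 : ℝ) • τ x (J x) = 0 := by rw [two_smul]; exact h2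
    have := smul_eq_zero.mp h3
    simpa using this

  -- packaged bilinear maps on L × L
  set Af : V →ₗ[ℝ] V →ₗ[ℝ] (L × L) :=
    τ.compr₂ (LinearMap.inl ℝ L L) - (τ.compl₂ J).compr₂ (LinearMap.inr ℝ L L) with hAfdef
  have hAf : ∀ x y : V, Af x y = (τ x y, -(τ x (J y))) := by
    intro x y
    simp only [hAfdef, LinearMap.sub_apply, LinearMap.compr₂_apply, LinearMap.compl₂_apply,
      LinearMap.inl_apply, LinearMap.inr_apply, Prod.mk_sub_mk, sub_zero, zero_sub]
  set pf : (L × L) →ₗ[ℝ] (L × L) →ₗ[ℝ] ℝ :=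
    BL.compl₁₂ (LinearMap.fst ℝ L L) (LinearMap.fst ℝ L L)
      - BL.compl₁₂ (LinearMap.snd ℝ L L) (LinearMap.snd ℝ L L) with hpfdef
  have hpf : ∀ a b : L × L, pf a b = BL a.1 b.1 - BL a.2 b.2 := by
    intro a b
    simp only [hpfdef, LinearMap.sub_apply, LinearMap.compl₁₂_apply, LinearMap.fst_apply,
      LinearMap.snd_apply]
  set Qf : (L × L) →ₗ[ℝ] (L × L) →ₗ[ℝ] ℝ :=
    BL.compl₁₂ (LinearMap.fst ℝ L L) (LinearMap.fst ℝ L L)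
      + BL.compl₁₂ (LinearMap.snd ℝ L L) (LinearMap.snd ℝ L L) with hQfdef
  have hQf : ∀ a b : L × L, Qf a b = BL a.1 b.1 + BL a.2 b.2 := by
    intro a b
    simp only [hQfdef, LinearMap.add_apply, LinearMap.compl₁₂_apply, LinearMap.fst_apply,
      LinearMap.snd_apply]
  -- flatness hypothesis for the Moore lemma
  have h1A : ∀ x t z y : V, pf (Af x t) (Af z y) = pf (Af x y) (Af z t) := by
    intro x t z y
    rw [hAf, hAf, hAf, hAf, hpf, hpf]
    simp only [map_neg, LinearMap.neg_apply, neg_neg]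
    exact hF1 x t z y
  -- positivity hypothesis
  have hwperp0 : ∀ x : L, BL x w = 0 → BL x x = 0 → x = 0 := by
    intro x h1 h2
    by_contra hne
    exact absurd h2 (ne_of_gt (hLor x h1 hne))
  have hwperpge : ∀ x : L, BL x w = 0 → 0 ≤ BL x x := by
    intro x h1
    rcases eq_or_ne x 0 with rfl | hne
    · simp
    · exact le_of_lt (hLor x h1 hne)
  set Wp : Submodule ℝ L := LinearMap.ker (BL.flip w) with hWpdef
  have hWpmem : ∀ x : L, x ∈ Wp ↔ BL x w = 0 := by
    intro x
    rw [hWpdef, LinearMap.mem_ker]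
    constructor <;> intro h <;> simpa [LinearMap.flip_apply] using h
  have hτWp : ∀ x y : V, τ x y ∈ Wp := fun x y => (hWpmem _).mpr (hτw x y)
  have hAval : ∀ x y : V, Af x y ∈ Wp.prod Wp := by
    intro x y
    rw [hAf]
    exact Submodule.mem_prod.mpr ⟨hτWp x y, neg_mem (hτWp x (J y))⟩
  have hQ0A : ∀ ξ ∈ Submodule.span ℝ {ξ : L × L | ∃ x y, ξ = Af x y}, Qf ξ ξ = 0 → ξ = 0 := by
    intro ξ hξ hQξ
    have hξWp : ξ ∈ Wp.prod Wp := by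
      have hle : Submodule.span ℝ {ξ : L × L | ∃ x y, ξ = Af x y} ≤ Wp.prod Wp := by
        rw [Submodule.span_le]
        rintro _ ⟨x, y, rfl⟩
        exact hAval x y
      exact hle hξ
    obtain ⟨hm1, hm2⟩ := Submodule.mem_prod.mp hξWp
    rw [hWpmem] at hm1 hm2
    rw [hQf] at hQξ
    have hg1 := hwperpge _ hm1
    have hg2 := hwperpge _ hm2
    have hz1 : BL ξ.1 ξ.1 = 0 := by linarith
    have hz2 : BL ξ.2 ξ.2 = 0 := by linarith
    have he1 := hwperp0 _ hm1 hz1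
    have he2 := hwperp0 _ hm2 hz2
    exact Prod.ext he1 he2
  -- the "hermitian" hypothesis
  have h3A : ∀ u t : V, pf (Af t u) (Af u t) = Qf (Af u t) (Af u t) := by
    intro u t
    rw [hAf, hAf, hpf, hQf]
    have hco : τ t (J u) = -(τ u (J t)) := by
      calc τ t (J u) = τ (J u) t := hτsymm t (J u)
        _ = -(τ u (J t)) := hτJ u t
    rw [hτsymm t u, hco]
    simp only [map_neg, LinearMap.neg_apply, neg_neg]
    ring
  -- apply the Moore lemma
  obtain ⟨Y₀, hM⟩ := Stmt12.moore Af pf Qf h1A hQ0A h3A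

  -- dimension bookkeeping
  set Wτ : Submodule ℝ L := Submodule.span ℝ {x : L | ∃ a b : V, x = τ a b} with hWτdef
  set M : Submodule ℝ L := Submodule.map (LinearMap.fst ℝ L L) Sβ with hMdef
  have hvM : v ∈ M := ⟨(v, 0), (Submodule.mem_inf.mp hv0mem).1, rfl⟩
  have hφM : ∀ a b : V, α a b + α (J a) (J b) ∈ M := by
    intro a b
    exact ⟨β a b, hβmem a b, by rw [hβ]; rfl⟩
  have hτM : ∀ a b : V, τ a b ∈ M := by
    intro a b
    rw [hτ]
    exact Submodule.add_mem _ (hφM a b) (Submodule.smul_mem _ _ hvM)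
  set MW : Submodule ℝ L := M ⊓ Wp with hMWdef
  have hWτle : Wτ ≤ MW := by
    rw [hWτdef, Submodule.span_le]
    rintro _ ⟨a, b, rfl⟩
    exact Submodule.mem_inf.mpr ⟨hτM a b, hτWp a b⟩
  have hvnotMW : v ∉ MW := by
    intro h
    have h2 := (hWpmem v).mp (Submodule.mem_inf.mp h).2
    rw [← hcv] at h2
    exact hc0 h2
  have hMWlt : MW < M := lt_of_le_of_ne inf_le_left (fun h => hvnotMW (h.symm ▸ hvM))
  have hsM : finrank ℝ M = s := by rw [hs, hMdef]
  have hq : finrank ℝ Wτ ≤ s - 1 := by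
    have h1 : finrank ℝ Wτ ≤ finrank ℝ MW := Submodule.finrank_mono hWτle
    have h2 : finrank ℝ MW < finrank ℝ M := Submodule.finrank_lt_finrank_of_lt hMWlt
    omega
  have hs1 : 1 ≤ s := by
    by_contra h
    have hM0 : M = ⊥ := by
      rw [← Submodule.finrank_eq_zero (S := M)]
      omega
    rw [hM0] at hvM
    exact hv0 ((Submodule.mem_bot ℝ).mp hvM)
  -- the kernel K
  have hgmem1 : ∀ u : V, (τ.flip Y₀) u ∈ Wτ := by
    intro u
    simp only [LinearMap.flip_apply]
    exact Submodule.subset_span ⟨u, Y₀, rfl⟩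
  have hgmem2 : ∀ u : V, (τ.flip (J Y₀)) u ∈ Wτ := by
    intro u
    simp only [LinearMap.flip_apply]
    exact Submodule.subset_span ⟨u, J Y₀, rfl⟩
  set gk : V →ₗ[ℝ] Wτ × Wτ :=
    LinearMap.prod (LinearMap.codRestrict Wτ (τ.flip Y₀) hgmem1)
      (LinearMap.codRestrict Wτ (τ.flip (J Y₀)) hgmem2) with hgkdef
  set K : Submodule ℝ V := LinearMap.ker gk with hKdef
  have hKmem : ∀ u : V, u ∈ K ↔ (τ u Y₀ = 0 ∧ τ u (J Y₀) = 0) := by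
    intro u
    rw [hKdef, LinearMap.mem_ker, hgkdef, Prod.ext_iff]
    simp [LinearMap.prod_apply, LinearMap.codRestrict_apply, LinearMap.flip_apply,
      Subtype.ext_iff]
  have hrn := LinearMap.finrank_range_add_finrank_ker gk
  rw [hdV] at hrn
  have hrange : finrank ℝ (LinearMap.range gk) ≤ 2 * finrank ℝ Wτ := by
    have h1 : finrank ℝ (LinearMap.range gk) ≤ finrank ℝ (Wτ × Wτ) := Submodule.finrank_le _
    rw [Module.finrank_prod] at h1
    omega
  rw [← hKdef] at hrn
  have hK4 : 4 ≤ finrank ℝ K := by omega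
  have hKne : K ≠ ⊥ := by
    intro h
    rw [h, finrank_bot] at hK4
    omega
  obtain ⟨X₀, hX₀K, hX₀ne⟩ := (Submodule.ne_bot_iff K).mp hKne
  -- the span of X₀, J X₀ is small
  have hsing : ∀ x : V, finrank ℝ (Submodule.span ℝ ({x} : Set V)) ≤ 1 := by
    intro x
    have h1 := finrank_span_le_card (R := ℝ) ({x} : Set V)
    simpa using h1
  have hspan2 : finrank ℝ (Submodule.span ℝ ({X₀, J X₀} : Set V)) ≤ 2 := by
    have hs1' := Submodule.finrank_sup_add_finrank_inf_eq
      (Submodule.span ℝ ({X₀} : Set V)) (Submodule.span ℝ ({J X₀} : Set V))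
    have h2 : Submodule.span ℝ ({X₀, J X₀} : Set V) =
        Submodule.span ℝ ({X₀} : Set V) ⊔ Submodule.span ℝ ({J X₀} : Set V) := by
      rw [Submodule.span_insert]
    rw [h2]
    have h3 := hsing X₀
    have h4 := hsing (J X₀)
    omega
  have hnotle : ¬ (K ≤ Submodule.span ℝ ({X₀, J X₀} : Set V)) := by
    intro hle
    have h5 := Submodule.finrank_mono hle
    omega
  obtain ⟨X₁, hX₁K, hX₁notin⟩ := SetLike.not_le_iff_exists.mp hnotle
  clear hnotle
  have hX₁ne : X₁ ≠ 0 := by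
    intro h
    exact hX₁notin (h ▸ Submodule.zero_mem _)
  -- Moore conclusion: members of K annihilate τ
  have hMoore : ∀ u : V, u ∈ K → ∀ t : V, τ u t = 0 := by
    intro u hu t
    have hA0 : Af u Y₀ = 0 := by
      rw [hAf]
      obtain ⟨hh1, hh2⟩ := (hKmem u).mp hu
      rw [hh1, hh2]
      simp
    have hAt := hM u hA0 t
    rw [hAf] at hAt
    have := congrArg Prod.fst hAt
    simpa using this

  -- the star identity from compatibility
  intro X Y
  have hswap : ∀ Z T : V, BL v (α Z T) = BL (α Z T) v := fun Z T => hBLs _ _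
  have hstar : ∀ X' : V, (∀ t, τ X' t = 0) → ∀ Y' Z T : V,
      BV X' Y' * BL (α Z T) v - BV X' (J Y') * BL (α Z (J T)) v =
      BV X' T * BL (α Z Y') v - BV X' (J T) * BL (α Z (J Y')) v := by
    intro X' hN Y' Z T
    have hφval : ∀ y : V, α X' y + α (J X') (J y) = -(((2 / cv) * BV X' y) • v) := by
      intro y
      have h0 := hτ X' y
      rw [hN y] at h0
      exact eq_neg_of_add_eq_zero_left h0.symm
    have hcompat' := hcompat X' Y' Z T
    rw [hBw, hβ, hγ, hBw, hβ, hγ] at hcompat'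
    dsimp only at hcompat'
    rw [hψeq X' Y', hψeq X' T, hφval Y', hφval (J Y'), hφval T, hφval (J T)] at hcompat'
    simp only [map_neg, map_smul, LinearMap.neg_apply, LinearMap.smul_apply, smul_eq_mul,
      hswap] at hcompat'
    field_simp at hcompat'
    have hne2 : (-2 : ℝ) * cv ≠ 0 := by
      simp [hc0]
    refine mul_left_cancel₀ hne2 ?_
    linear_combination (2 * cv) * hcompat'

  -- basic J-identities
  have hBVJJ : ∀ x y : V, BV x (J (J y)) = -BV x y := by
    intro x y; rw [hJJ y, map_neg]
  have hffJJ : ∀ Z T : V, BL (α Z (J (J T))) v = -BL (α Z T) v := by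
    intro Z T; rw [hJJ T]; simp [map_neg]
  have hBVxJx : ∀ x : V, BV x (J x) = 0 := by
    intro x
    have h1 : BV x (J x) = -BV x (J x) := by
      calc BV x (J x) = BV (J x) (J (J x)) := (hJiso x (J x)).symm
        _ = -BV (J x) x := hBVJJ (J x) x
        _ = -BV x (J x) := by rw [hBVs]
    linarith
  have hBVflip : ∀ x t : V, BV x (J t) = -BV (J x) t := by
    intro x t
    calc BV x (J t) = BV (J x) (J (J t)) := (hJiso x (J t)).symm
      _ = -BV (J x) t := hBVJJ (J x) t
  have hN0 : ∀ t, τ X₀ t = 0 := hMoore X₀ hX₀K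
  have hN1 : ∀ t, τ X₁ t = 0 := hMoore X₁ hX₁K
  -- complexified star identity
  have hkey : ∀ X' : V, (∀ t, τ X' t = 0) → ∀ Z Y' T' : V,
      ((BV X' Y' : ℂ) - (BV X' (J Y') : ℂ) * Complex.I) *
        ((BL (α Z T') v : ℂ) - (BL (α Z (J T')) v : ℂ) * Complex.I) =
      ((BV X' T' : ℂ) - (BV X' (J T') : ℂ) * Complex.I) *
        ((BL (α Z Y') v : ℂ) - (BL (α Z (J Y')) v : ℂ) * Complex.I) := by
    intro X' hN Z Y' T'
    have h1 := hstar X' hN Y' Z T'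
    have h2 := hstar X' hN (J Y') Z T'
    rw [hBVJJ, hffJJ] at h2
    apply Complex.ext
    · simp only [Complex.mul_re, Complex.sub_re, Complex.sub_im, Complex.ofReal_re,
        Complex.ofReal_im, Complex.mul_im, Complex.I_re, Complex.I_im]
      ring_nf
      linear_combination h1
    · simp only [Complex.mul_re, Complex.sub_re, Complex.sub_im, Complex.ofReal_re,
        Complex.ofReal_im, Complex.mul_im, Complex.I_re, Complex.I_im]
      ring_nf
      linear_combination -h2
  set b0 : ℝ := BV X₀ X₀ with hb0def
  have hb0 : b0 ≠ 0 := ne_of_gt (hVpos X₀ hX₀ne)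
  set b1 : ℝ := BV X₁ X₁ with hb1def
  have hb1 : b1 ≠ 0 := ne_of_gt (hVpos X₁ hX₁ne)
  have he0 : ∀ Z T' : V,
      (b0 : ℂ) * ((BL (α Z T') v : ℂ) - (BL (α Z (J T')) v : ℂ) * Complex.I)
      = ((BV X₀ T' : ℂ) - (BV X₀ (J T') : ℂ) * Complex.I) *
        ((BL (α Z X₀) v : ℂ) - (BL (α Z (J X₀)) v : ℂ) * Complex.I) := by
    intro Z T'
    have h := hkey X₀ hN0 Z X₀ T'
    rw [hBVxJx X₀] at h
    rw [← h]
    push_cast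
    ring
  have he1 : ∀ Z T' : V,
      (b1 : ℂ) * ((BL (α Z T') v : ℂ) - (BL (α Z (J T')) v : ℂ) * Complex.I)
      = ((BV X₁ T' : ℂ) - (BV X₁ (J T') : ℂ) * Complex.I) *
        ((BL (α Z X₁) v : ℂ) - (BL (α Z (J X₁)) v : ℂ) * Complex.I) := by
    intro Z T'
    have h := hkey X₁ hN1 Z X₁ T'
    rw [hBVxJx X₁] at h
    rw [← h]
    push_cast
    ring
  have hgoal : ∀ Z T' : V, BL (α Z T') v = 0 := by
    intro Z T'
    by_cases hA : ((BL (α Z X₀) v : ℂ) - (BL (α Z (J X₀)) v : ℂ) * Complex.I) = 0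
    · have h := he0 Z T'
      rw [hA, mul_zero] at h
      have hb0c : (b0 : ℂ) ≠ 0 := by exact_mod_cast hb0
      have h2 : ((BL (α Z T') v : ℂ) - (BL (α Z (J T')) v : ℂ) * Complex.I) = 0 := by
        rcases mul_eq_zero.mp h with h3 | h3
        · exact absurd h3 hb0c
        · exact h3
      have h4 := congrArg Complex.re h2
      simpa using h4
    · exfalso
      obtain ⟨c0, hc0def⟩ : ∃ c : ℂ, c = (BL (α Z X₀) v : ℂ) - (BL (α Z (J X₀)) v : ℂ) * Complex.I := ⟨_, rfl⟩
      obtain ⟨c1, hc1def⟩ : ∃ c : ℂ, c = (BL (α Z X₁) v : ℂ) - (BL (α Z (J X₁)) v : ℂ) * Complex.I := ⟨_, rfl⟩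
      rw [← hc0def] at hA
      obtain ⟨lam, hlamdef⟩ : ∃ l : ℂ, l = (c1 * (b0 : ℂ)) / (c0 * (b1 : ℂ)) := ⟨_, rfl⟩
      have hb0c : (b0 : ℂ) ≠ 0 := by exact_mod_cast hb0
      have hb1c : (b1 : ℂ) ≠ 0 := by exact_mod_cast hb1
      have hden : c0 * (b1 : ℂ) ≠ 0 := mul_ne_zero hA hb1c
      have hlam : ∀ T'' : V,
          ((BV X₀ T'' : ℂ) - (BV X₀ (J T'') : ℂ) * Complex.I)
          = ((BV X₁ T'' : ℂ) - (BV X₁ (J T'') : ℂ) * Complex.I) * lam := by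
        intro T''
        have e0 := he0 Z T''
        have e1 := he1 Z T''
        rw [← hc0def] at e0
        rw [← hc1def] at e1
        rw [hlamdef]
        field_simp
        -- goal: m0 * (c0 * b1) = m1 * (c1 * b0)
        have e2 : ((BV X₀ T'' : ℂ) - (BV X₀ (J T'') : ℂ) * Complex.I) * c0 * (b1 : ℂ)
            = (b0 : ℂ) * ((BL (α Z T'') v : ℂ) - (BL (α Z (J T'')) v : ℂ) * Complex.I) * (b1:ℂ) := by
          linear_combination (-(b1 : ℂ)) * e0
        have e3 : ((BV X₁ T'' : ℂ) - (BV X₁ (J T'') : ℂ) * Complex.I) * c1 * (b0 : ℂ)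
            = (b1 : ℂ) * ((BL (α Z T'') v : ℂ) - (BL (α Z (J T'')) v : ℂ) * Complex.I) * (b0:ℂ) := by
          linear_combination (-(b0 : ℂ)) * e1
        linear_combination e2 - e3
      -- lam ≠ 0
      have hlamne : lam ≠ 0 := by
        intro h0
        have := hlam X₀
        rw [h0, mul_zero, hBVxJx X₀] at this
        simp only [Complex.ofReal_zero, zero_mul, sub_zero] at this
        rw [← hb0def] at this
        exact hb0c this
      -- real and imaginary extraction
      have hre : ∀ T'' : V, BV X₀ T'' = lam.re * BV X₁ T'' - lam.im * BV (J X₁) T'' := by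
        intro T''
        have h := congrArg Complex.re (hlam T'')
        simp only [Complex.mul_re, Complex.sub_re, Complex.sub_im, Complex.ofReal_re,
          Complex.ofReal_im, Complex.mul_im, Complex.I_re, Complex.I_im] at h
        rw [hBVflip X₁ T''] at h
        ring_nf at h ⊢
        linarith only [h]
      obtain ⟨ξ, hξdef⟩ : ∃ x : V, x = X₀ - (lam.re • X₁ - lam.im • (J X₁)) := ⟨_, rfl⟩
      have hBVξ : ∀ T'' : V, BV ξ T'' = 0 := by
        intro T''
        rw [hξdef]
        simp only [map_sub, map_smul, LinearMap.sub_apply, LinearMap.smul_apply, smul_eq_mul]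
        have := hre T''
        linarith only [this]
      have hξ0 : ξ = 0 := by
        by_contra hne
        have := hVpos ξ hne
        rw [hBVξ ξ] at this
        exact lt_irrefl 0 this
      have hX0eq : X₀ = lam.re • X₁ - lam.im • (J X₁) := by
        have := sub_eq_zero.mp (hξdef ▸ hξ0)
        exact this
      obtain ⟨d, hddef⟩ : ∃ r : ℝ, r = lam.re ^ 2 + lam.im ^ 2 := ⟨_, rfl⟩
      have hdne : d ≠ 0 := by
        intro h0
        apply hlamne
        rw [hddef] at h0
        have hre0 : lam.re ^ 2 = 0 := by
          linarith only [h0, sq_nonneg lam.re, sq_nonneg lam.im]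
        have him0 : lam.im ^ 2 = 0 := by
          linarith only [h0, sq_nonneg lam.re, sq_nonneg lam.im]
        exact Complex.ext (pow_eq_zero_iff two_ne_zero |>.mp hre0)
          (pow_eq_zero_iff two_ne_zero |>.mp him0)
      have hdX1 : d • X₁ = lam.re • X₀ + lam.im • (J X₀) := by
        rw [hX0eq, map_sub, map_smul, map_smul, hJJ X₁, hddef]
        module
      have hX1eq : X₁ = (d⁻¹ * lam.re) • X₀ + (d⁻¹ * lam.im) • (J X₀) := by
        have h1 : d⁻¹ • (d • X₁) = d⁻¹ • (lam.re • X₀ + lam.im • (J X₀)) := by rw [hdX1]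
        rw [smul_smul, inv_mul_cancel₀ hdne, one_smul] at h1
        rw [h1, smul_add, smul_smul, smul_smul]
      exact hX₁notin (Submodule.mem_span_pair.mpr
        ⟨d⁻¹ * lam.re, d⁻¹ * lam.im, hX1eq.symm⟩)
  exact hgoal X Y
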